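/- arXiv:1710.02104 — 9 statements merged into one kernel-verified Lean document; each statement's English description precedes it below -/
import Mathlib

section
/- Let H be a real Hilbert space, u ∈ H, and let O_1, …, O_N be complete (closed) subspaces of H satisfying the partition-of-unity stability property with constant c_pu > 0. Let W be a finite-dimensional subspace of H, set e := u − P_W u, and let k ∈ {1,…,N} be an index such that ‖P_{O_k} e‖ ≥ ‖P_{O_i} e‖ for all i = 1,…,N. Let W' := W + span{P_{O_k} e}. Then ‖u − P_{W'} u‖ ≤ c · ‖u − P_W u‖, where c := sqrt(1 − 1/(N · c_pu²)). -/
/-- Theorem 1 (exponential convergence of residual-based online enrichment),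
one-step contraction form, in a real Hilbert space `H`.
The subspaces `O i` satisfy the partition-of-unity stability property with
constant `c_pu > 0`; `W` is a finite-dimensional reduced space, `e := u - P_W u`
the error, `k` maximizes `‖P_{O i} e‖`, and the enriched space is
`W' := W + span {P_{O k} e}`. -/
theorem residual_enrichment_one_step_contraction
    {H : Type*} [NormedAddCommGroup H] [InnerProductSpace ℝ H] [CompleteSpace H]
    (u : H) (N : ℕ) (O : Fin N → Submodule ℝ H) [∀ i, CompleteSpace (O i)]
    (c_pu : ℝ) (hc_pu : 0 < c_pu)
    (hpu : ∀ φ : H, ∃ ψ : Fin N → H, (∀ i, ψ i ∈ O i) ∧ (∑ i, ψ i) = φ ∧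
      ∑ i, ‖ψ i‖ ^ 2 ≤ c_pu ^ 2 * ‖φ‖ ^ 2)
    (W : Submodule ℝ H) [FiniteDimensional ℝ W]
    (k : Fin N)
    (hk : ∀ i, ‖(Submodule.orthogonalProjectionOnto (O i) (u - (Submodule.orthogonalProjectionOnto W u : H)) : H)‖ ≤
      ‖(Submodule.orthogonalProjectionOnto (O k) (u - (Submodule.orthogonalProjectionOnto W u : H)) : H)‖) :
    ‖u - (Submodule.orthogonalProjectionOnto
        (W ⊔ Submodule.span ℝ
          {((Submodule.orthogonalProjectionOnto (O k) (u - (Submodule.orthogonalProjectionOnto W u : H)) : H))}) u : H)‖ ≤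
      Real.sqrt (1 - 1 / (N * c_pu ^ 2)) * ‖u - (Submodule.orthogonalProjectionOnto W u : H)‖ := by
  set e : H := u - (Submodule.orthogonalProjectionOnto W u : H) with he
  set v : H := (Submodule.orthogonalProjectionOnto (O k) e : H) with hv
  set W' : Submodule ℝ H := W ⊔ Submodule.span ℝ {v} with hW'
  haveI : FiniteDimensional ℝ W' := Submodule.finiteDimensional_sup W _
  -- Step 1: minimality with candidate P_W u + v ∈ W'
  have hwmem : (Submodule.orthogonalProjectionOnto W u : H) + v ∈ W' := by
    exact Submodule.add_mem_sup (Submodule.coe_mem _)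
      (Submodule.mem_span_singleton_self v)
  have hmin : ‖u - (Submodule.orthogonalProjectionOnto W' u : H)‖ ≤ ‖e - v‖ := by
    rw [← Submodule.starProjection_apply, Submodule.starProjection_minimal]
    have : ‖e - v‖ = ‖u - (⟨_, hwmem⟩ : W')‖ := by
      simp only [he]
      congr 1
      abel
    rw [this]
    exact ciInf_le ⟨0, fun x => by rintro ⟨y, rfl⟩; positivity⟩ _
  -- Step 2: ⟪e - v, v⟫ = 0
  have horth : inner ℝ (e - v) v = (0 : ℝ) :=
    Submodule.starProjection_inner_eq_zero e v (Submodule.coe_mem _)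
  have hev : inner ℝ e v = ‖v‖ ^ 2 := by
    have := horth
    rw [inner_sub_left, sub_eq_zero] at this
    rw [this, real_inner_self_eq_norm_sq]
  have hpyth : ‖e - v‖ ^ 2 = ‖e‖ ^ 2 - ‖v‖ ^ 2 := by
    rw [norm_sub_pow_two_real, hev]; ring
  -- Step 3: ‖e‖² ≤ N * c_pu² * ‖v‖²
  have hkey : ‖e‖ ^ 2 ≤ (N : ℝ) * c_pu ^ 2 * ‖v‖ ^ 2 := by
    obtain ⟨ψ, hmem, hsum, hstab⟩ := hpu e
    have h1 : ‖e‖ ^ 2 ≤ ‖v‖ * ∑ i, ‖ψ i‖ := by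
      calc ‖e‖ ^ 2 = inner ℝ e e := (real_inner_self_eq_norm_sq e).symm
        _ = ∑ i, inner ℝ e (ψ i) := by rw [← hsum, inner_sum]
        _ ≤ ∑ i, ‖v‖ * ‖ψ i‖ := by
            apply Finset.sum_le_sum
            intro i _
            have : (inner ℝ e (ψ i) : ℝ) = inner ℝ (Submodule.orthogonalProjectionOnto (O i) e : H) (ψ i) := by
              have h0 : inner ℝ (e - (Submodule.orthogonalProjectionOnto (O i) e : H)) (ψ i) = (0 : ℝ) :=
                Submodule.starProjection_inner_eq_zero e (ψ i) (hmem i)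
              rw [inner_sub_left, sub_eq_zero] at h0
              exact h0
            rw [this]
            calc inner ℝ (Submodule.orthogonalProjectionOnto (O i) e : H) (ψ i)
                ≤ ‖(Submodule.orthogonalProjectionOnto (O i) e : H)‖ * ‖ψ i‖ :=
                  real_inner_le_norm _ _
              _ ≤ ‖v‖ * ‖ψ i‖ :=
                  mul_le_mul_of_nonneg_right (hk i) (norm_nonneg _)
        _ = ‖v‖ * ∑ i, ‖ψ i‖ := by rw [Finset.mul_sum]
    have h2 : (∑ i, ‖ψ i‖) ^ 2 ≤ (N : ℝ) * ∑ i, ‖ψ i‖ ^ 2 := by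
      have := Finset.sum_mul_sq_le_sq_mul_sq Finset.univ (fun _ : Fin N => (1 : ℝ))
        (fun i => ‖ψ i‖)
      simpa [Finset.card_univ] using this
    have h3 : (‖e‖ ^ 2) ^ 2 ≤ ‖v‖ ^ 2 * ((N : ℝ) * (c_pu ^ 2 * ‖e‖ ^ 2)) := by
      calc (‖e‖ ^ 2) ^ 2 ≤ (‖v‖ * ∑ i, ‖ψ i‖) ^ 2 := by
            apply sq_le_sq' _ h1
            nlinarith [sq_nonneg ‖e‖, norm_nonneg v,
              Finset.sum_nonneg (fun i (_ : i ∈ Finset.univ) => norm_nonneg (ψ i))]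
        _ = ‖v‖ ^ 2 * (∑ i, ‖ψ i‖) ^ 2 := by ring
        _ ≤ ‖v‖ ^ 2 * ((N : ℝ) * ∑ i, ‖ψ i‖ ^ 2) := by
            apply mul_le_mul_of_nonneg_left _ (sq_nonneg _)
            exact h2
        _ ≤ ‖v‖ ^ 2 * ((N : ℝ) * (c_pu ^ 2 * ‖e‖ ^ 2)) := by
            apply mul_le_mul_of_nonneg_left _ (sq_nonneg _)
            exact mul_le_mul_of_nonneg_left hstab (Nat.cast_nonneg N)
    rcases eq_or_ne ‖e‖ 0 with h0 | h0
    · rw [h0]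
      have : (0:ℝ) ≤ (N : ℝ) * c_pu ^ 2 * ‖v‖ ^ 2 := by positivity
      nlinarith
    · have hpos : 0 < ‖e‖ ^ 2 := by positivity
      nlinarith [h3, hpos]
  rcases eq_or_ne ‖e‖ 0 with h0 | h0
  · have he0 : e = 0 := norm_eq_zero.mp h0
    have hv0 : v = 0 := by
      rw [hv, he0]
      simp
    have : ‖u - (Submodule.orthogonalProjectionOnto W' u : H)‖ ≤ 0 := by
      calc ‖u - (Submodule.orthogonalProjectionOnto W' u : H)‖ ≤ ‖e - v‖ := hmin
        _ = 0 := by rw [he0, hv0]; simp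
    have hz : ‖u - (Submodule.orthogonalProjectionOnto W' u : H)‖ = 0 :=
      le_antisymm this (norm_nonneg _)
    rw [hz]
    positivity
  -- main case: e ≠ 0
  have hepos : 0 < ‖e‖ ^ 2 := by positivity
  have hNc : 1 ≤ (N : ℝ) * c_pu ^ 2 := by
    have hvle : ‖v‖ ^ 2 ≤ ‖e‖ ^ 2 := by
      have := Submodule.orthogonalProjectionOnto_norm_le (O k)
      have h := (Submodule.orthogonalProjectionOnto (O k)).le_opNorm e
      have : ‖v‖ ≤ ‖e‖ := by
        calc ‖v‖ ≤ ‖Submodule.orthogonalProjectionOnto (O k)‖ * ‖e‖ := h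
          _ ≤ 1 * ‖e‖ := mul_le_mul_of_nonneg_right this (norm_nonneg e)
          _ = ‖e‖ := one_mul _
      nlinarith [norm_nonneg v]
    have hN0 : (0:ℝ) ≤ (N : ℝ) * c_pu ^ 2 := by positivity
    nlinarith [hkey, hepos, hvle, mul_le_mul_of_nonneg_left hvle hN0]
  have hNcpos : 0 < (N : ℝ) * c_pu ^ 2 := lt_of_lt_of_le one_pos hNc
  have hfrac : 0 ≤ 1 - 1 / ((N : ℝ) * c_pu ^ 2) := by
    rw [sub_nonneg, div_le_one hNcpos]; exact hNc
  have hsq : ‖u - (Submodule.orthogonalProjectionOnto W' u : H)‖ ^ 2 ≤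
      (1 - 1 / ((N : ℝ) * c_pu ^ 2)) * ‖e‖ ^ 2 := by
    have h1 : ‖u - (Submodule.orthogonalProjectionOnto W' u : H)‖ ^ 2 ≤ ‖e‖ ^ 2 - ‖v‖ ^ 2 := by
      rw [← hpyth]
      exact pow_le_pow_left₀ (norm_nonneg _) hmin 2
    have h2 : ‖e‖ ^ 2 / ((N : ℝ) * c_pu ^ 2) ≤ ‖v‖ ^ 2 := by
      rw [div_le_iff₀ hNcpos]
      nlinarith [hkey]

    calc ‖u - (Submodule.orthogonalProjectionOnto W' u : H)‖ ^ 2 ≤ ‖e‖ ^ 2 - ‖v‖ ^ 2 := h1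
      _ ≤ ‖e‖ ^ 2 - ‖e‖ ^ 2 / ((N : ℝ) * c_pu ^ 2) := by linarith
      _ = (1 - 1 / ((N : ℝ) * c_pu ^ 2)) * ‖e‖ ^ 2 := by field_simp
  have hfin : ‖u - (Submodule.orthogonalProjectionOnto W' u : H)‖ ≤
      Real.sqrt (1 - 1 / ((N : ℝ) * c_pu ^ 2)) * ‖e‖ := by
    calc ‖u - (Submodule.orthogonalProjectionOnto W' u : H)‖
        = Real.sqrt (‖u - (Submodule.orthogonalProjectionOnto W' u : H)‖ ^ 2) :=
          (Real.sqrt_sq (norm_nonneg _)).symm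
      _ ≤ Real.sqrt ((1 - 1 / ((N : ℝ) * c_pu ^ 2)) * ‖e‖ ^ 2) := Real.sqrt_le_sqrt hsq
      _ = Real.sqrt (1 - 1 / ((N : ℝ) * c_pu ^ 2)) * ‖e‖ := by
          rw [Real.sqrt_mul hfrac, Real.sqrt_sq (norm_nonneg _)]
  convert hfin using 4
end

section
/- Let H be a real Hilbert space, u ∈ H, and let O_1, …, O_N be complete (closed) subspaces of H satisfying the partition-of-unity stability property with constant c_pu > 0. Let (W_n)_{n≥0} be a sequence of finite-dimensional subspaces of H defined recursively by W_0 = {0} and W_{n+1} = W_n + span{P_{O_{k_n}}(u − P_{W_n} u)}, where for each n the index k_n ∈ {1,…,N} satisfies ‖P_{O_{k_n}}(u − P_{W_n} u)‖ ≥ ‖P_{O_i}(u − P_{W_n} u)‖ for all i = 1,…,N. Then for all n ≥ 0: ‖u − P_{W_n} u‖ ≤ c^n · ‖u‖, where c := sqrt(1 − 1/(N · c_pu²)). -/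
/-- Corollary 1 (exponential convergence of residual-based online enrichment,
Algorithm 1): starting from `W 0 = ⊥` and enriching in each step by the
projection of the current error onto the local space with maximal projected
error, the reduced solutions `P_{W n} u` satisfy
`‖u - P_{W n} u‖ ≤ c^n ‖u‖` with `c = sqrt(1 - 1/(N c_pu²))`. -/
theorem residual_enrichment_exponential_convergence
    {H : Type*} [NormedAddCommGroup H] [InnerProductSpace ℝ H] [CompleteSpace H]
    (u : H) (N : ℕ) (O : Fin N → Submodule ℝ H) [∀ i, CompleteSpace (O i)]
    (c_pu : ℝ) (hc_pu : 0 < c_pu)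
    (hpu : ∀ φ : H, ∃ ψ : Fin N → H, (∀ i, ψ i ∈ O i) ∧ (∑ i, ψ i) = φ ∧
      ∑ i, ‖ψ i‖ ^ 2 ≤ c_pu ^ 2 * ‖φ‖ ^ 2)
    (W : ℕ → Submodule ℝ H) [∀ n, FiniteDimensional ℝ (W n)]
    (k : ℕ → Fin N)
    (hW0 : W 0 = ⊥)
    (hWsucc : ∀ n, W (n + 1) = W n ⊔ Submodule.span ℝ
      {((Submodule.orthogonalProjectionOnto (O (k n)) (u - (Submodule.orthogonalProjectionOnto (W n) u : H)) : H))})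
    (hk : ∀ n i,
      ‖(Submodule.orthogonalProjectionOnto (O i) (u - (Submodule.orthogonalProjectionOnto (W n) u : H)) : H)‖ ≤
      ‖(Submodule.orthogonalProjectionOnto (O (k n)) (u - (Submodule.orthogonalProjectionOnto (W n) u : H)) : H)‖) :
    ∀ n, ‖u - (Submodule.orthogonalProjectionOnto (W n) u : H)‖ ≤
      Real.sqrt (1 - 1 / (N * c_pu ^ 2)) ^ n * ‖u‖ := by
  set c2 : ℝ := 1 - 1 / (N * c_pu ^ 2) with hc2
  set c : ℝ := Real.sqrt c2 with hc
  have hcnn : 0 ≤ c := Real.sqrt_nonneg _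
  have step : ∀ n, ‖u - (Submodule.orthogonalProjectionOnto (W (n+1)) u : H)‖ ≤
      c * ‖u - (Submodule.orthogonalProjectionOnto (W n) u : H)‖ := by
    intro n
    set e : H := u - (Submodule.orthogonalProjectionOnto (W n) u : H) with he
    set p : H := (Submodule.orthogonalProjectionOnto (O (k n)) e : H) with hp
    -- the candidate element of W (n+1)
    have hmem : ((Submodule.orthogonalProjectionOnto (W n) u : H) + p) ∈ W (n+1) := by
      rw [hWsucc n]
      exact Submodule.add_mem_sup (Submodule.coe_mem _)
        (Submodule.mem_span_singleton_self _)
    have h1 : ‖u - (Submodule.orthogonalProjectionOnto (W (n+1)) u : H)‖ ≤ ‖e - p‖ := by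
      rw [← Submodule.starProjection_apply, Submodule.starProjection_minimal]
      have heq : ‖e - p‖ = ‖u - ((⟨_, hmem⟩ : W (n+1)) : H)‖ := by
        simp only [he]
        congr 1
        abel
      rw [heq]
      refine ciInf_le ⟨0, ?_⟩ _
      rintro x ⟨y, rfl⟩
      positivity
    -- orthogonal decomposition of the error
    have hperp : (inner ℝ (e - p) (p) : ℝ) = 0 := by
      rw [hp]
      exact Submodule.starProjection_inner_eq_zero e _ (Submodule.coe_mem _)
    have hop : ‖e - p‖ ^ 2 = ‖e‖ ^ 2 - ‖p‖ ^ 2 := by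
      have h := norm_add_sq_real (e - p) p
      rw [sub_add_cancel, hperp] at h
      linarith
    by_cases he0 : e = 0
    · have hp0 : p = 0 := by simp [hp, he0]
      calc ‖u - (Submodule.orthogonalProjectionOnto (W (n+1)) u : H)‖ ≤ ‖e - p‖ := h1
        _ = 0 := by simp [hp0, he0]
        _ ≤ c * ‖e‖ := by positivity
    · obtain ⟨ψ, hψmem, hψsum, hψnorm⟩ := hpu e
      have hen : (0:ℝ) < ‖e‖ := norm_pos_iff.mpr he0
      have hN : 0 < N := by
        rcases Nat.eq_zero_or_pos N with h0 | h
        · exfalso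
          subst h0
          simp at hψsum
          exact he0 hψsum.symm
        · exact h
      have hNR : (0:ℝ) < (N:ℝ) := by exact_mod_cast hN
      -- key estimate via partition of unity
      have h2 : ‖e‖ ^ 2 = ∑ i, (inner ℝ (e) (ψ i) : ℝ) := by
        calc ‖e‖ ^ 2 = (inner ℝ (e) (e) : ℝ) := (real_inner_self_eq_norm_sq e).symm
          _ = (inner ℝ (e) (∑ i, ψ i) : ℝ) := by rw [hψsum]
          _ = ∑ i, (inner ℝ (e) (ψ i) : ℝ) := inner_sum _ _ _
      have h3 : ∀ i, (inner ℝ (e) (ψ i) : ℝ) ≤ ‖p‖ * ‖ψ i‖ := by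
        intro i
        have h0 : inner ℝ (e - ((Submodule.orthogonalProjectionOnto (O i) e : H))) (ψ i) = 0 :=
          Submodule.starProjection_inner_eq_zero e (ψ i) (hψmem i)
        rw [inner_sub_left] at h0
        have heqi : (inner ℝ (e) (ψ i) : ℝ) = (inner ℝ (((Submodule.orthogonalProjectionOnto (O i) e : H))) (ψ i) : ℝ) := by
          linarith
        rw [heqi]
        calc (inner ℝ (((Submodule.orthogonalProjectionOnto (O i) e : H))) (ψ i) : ℝ)
            ≤ ‖(Submodule.orthogonalProjectionOnto (O i) e : H)‖ * ‖ψ i‖ := real_inner_le_norm _ _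
          _ ≤ ‖p‖ * ‖ψ i‖ :=
            mul_le_mul_of_nonneg_right (hk n i) (norm_nonneg _)
      have hs2 : Real.sqrt N ^ 2 = (N:ℝ) := Real.sq_sqrt (by positivity)
      have h4 : ∑ i, ‖ψ i‖ ≤ Real.sqrt N * (c_pu * ‖e‖) := by
        have hcs : (∑ i, ‖ψ i‖) ^ 2 ≤ (N:ℝ) * ∑ i, ‖ψ i‖ ^ 2 := by
          have := sq_sum_le_card_mul_sum_sq
            (s := (Finset.univ : Finset (Fin N))) (f := fun i => ‖ψ i‖)
          simpa using this
        have hsq : (∑ i, ‖ψ i‖) ^ 2 ≤ (Real.sqrt N * (c_pu * ‖e‖)) ^ 2 := by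
          have : (Real.sqrt N * (c_pu * ‖e‖)) ^ 2 = (N:ℝ) * (c_pu ^ 2 * ‖e‖ ^ 2) := by
            rw [mul_pow, mul_pow, hs2]
          rw [this]
          calc (∑ i, ‖ψ i‖) ^ 2 ≤ (N:ℝ) * ∑ i, ‖ψ i‖ ^ 2 := hcs
            _ ≤ (N:ℝ) * (c_pu ^ 2 * ‖e‖ ^ 2) :=
              mul_le_mul_of_nonneg_left hψnorm (by positivity)
        have hs1 : (0:ℝ) ≤ ∑ i, ‖ψ i‖ := Finset.sum_nonneg fun i _ => norm_nonneg _
        have hs3 : (0:ℝ) ≤ Real.sqrt N * (c_pu * ‖e‖) := by positivity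
        nlinarith
      have key : ‖e‖ ^ 2 ≤ ‖p‖ * (Real.sqrt N * (c_pu * ‖e‖)) := by
        calc ‖e‖ ^ 2 = ∑ i, (inner ℝ (e) (ψ i) : ℝ) := h2
          _ ≤ ∑ i, ‖p‖ * ‖ψ i‖ := Finset.sum_le_sum fun i _ => h3 i
          _ = ‖p‖ * ∑ i, ‖ψ i‖ := by rw [Finset.mul_sum]
          _ ≤ ‖p‖ * (Real.sqrt N * (c_pu * ‖e‖)) :=
            mul_le_mul_of_nonneg_left h4 (norm_nonneg _)
      have hpn : (0:ℝ) ≤ ‖p‖ := norm_nonneg _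
      have hsn : (0:ℝ) ≤ Real.sqrt N := Real.sqrt_nonneg _
      have hkey1 : ‖e‖ ≤ ‖p‖ * (Real.sqrt N * c_pu) := by nlinarith
      have hkey2 : ‖e‖ ^ 2 ≤ ‖p‖ ^ 2 * ((N:ℝ) * c_pu ^ 2) := by
        calc ‖e‖ ^ 2 ≤ (‖p‖ * (Real.sqrt N * c_pu)) ^ 2 := pow_le_pow_left₀ hen.le hkey1 2
          _ = ‖p‖ ^ 2 * (Real.sqrt N ^ 2 * c_pu ^ 2) := by ring
          _ = ‖p‖ ^ 2 * ((N:ℝ) * c_pu ^ 2) := by rw [hs2]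
      have hNc : (0:ℝ) < (N:ℝ) * c_pu ^ 2 := by positivity
      have hp2 : ‖e‖ ^ 2 / ((N:ℝ) * c_pu ^ 2) ≤ ‖p‖ ^ 2 := by
        rw [div_le_iff₀ hNc]
        linarith
      have hfinal : ‖e - p‖ ^ 2 ≤ c2 * ‖e‖ ^ 2 := by
        rw [hop, hc2]
        have : (1 - 1 / ((N:ℝ) * c_pu ^ 2)) * ‖e‖ ^ 2
            = ‖e‖ ^ 2 - ‖e‖ ^ 2 / ((N:ℝ) * c_pu ^ 2) := by
          field_simp
        rw [this]
        linarith
      have := Real.sqrt_le_sqrt hfinal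
      rw [Real.sqrt_sq (norm_nonneg _), Real.sqrt_mul' _ (sq_nonneg ‖e‖),
        Real.sqrt_sq (norm_nonneg _)] at this
      exact h1.trans this
  intro n
  induction n with
  | zero =>
    have hm := hW0.le (Submodule.coe_mem (Submodule.orthogonalProjectionOnto (W 0) u))
    rw [Submodule.mem_bot] at hm
    rw [hm]
    simp
  | succ n ih =>
    calc ‖u - (Submodule.orthogonalProjectionOnto (W (n+1)) u : H)‖
        ≤ c * ‖u - (Submodule.orthogonalProjectionOnto (W n) u : H)‖ := step n
      _ ≤ c * (c ^ n * ‖u‖) := mul_le_mul_of_nonneg_left ih hcnn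
      _ = c ^ (n + 1) * ‖u‖ := by ring
end

section
/- Let H be a real Hilbert space, u ∈ H, W a finite-dimensional subspace of H, and O a complete (closed) subspace of H. Set e := u − P_W u and û := P_O e, and let W' := W + span{û}. Then ‖u − P_{W'} u‖² ≤ ‖u − P_W u‖² − ‖û‖². -/
/-- One-step error-reduction inequality (equation (9)):
enriching a finite-dimensional reduced space `W` by the orthogonal projection
`û := P_O (u - P_W u)` of the error onto a complete subspace `O` reduces the
squared error by at least `‖û‖²`. -/
theorem one_step_error_reduction
    {H : Type*} [NormedAddCommGroup H] [InnerProductSpace ℝ H] [CompleteSpace H]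
    (u : H) (W : Submodule ℝ H) [FiniteDimensional ℝ W]
    (O : Submodule ℝ H) [CompleteSpace O] :
    ‖u - (Submodule.orthogonalProjectionOnto
        (W ⊔ Submodule.span ℝ
          {((Submodule.orthogonalProjectionOnto O (u - (Submodule.orthogonalProjectionOnto W u : H)) : H))}) u : H)‖ ^ 2 ≤
      ‖u - (Submodule.orthogonalProjectionOnto W u : H)‖ ^ 2 -
        ‖(Submodule.orthogonalProjectionOnto O (u - (Submodule.orthogonalProjectionOnto W u : H)) : H)‖ ^ 2 := by
  set e : H := u - (Submodule.orthogonalProjectionOnto W u : H) with he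
  set v : H := (Submodule.orthogonalProjectionOnto O e : H) with hv
  set W' : Submodule ℝ H := W ⊔ Submodule.span ℝ {v} with hW'
  have hvW' : (Submodule.orthogonalProjectionOnto W u : H) + v ∈ W' := by
    exact Submodule.add_mem_sup (Submodule.coe_mem _)
      (Submodule.mem_span_singleton_self v)
  -- minimality of orthogonal projection
  have h1 : ‖u - (Submodule.orthogonalProjectionOnto W' u : H)‖ ≤ ‖u - ((Submodule.orthogonalProjectionOnto W u : H) + v)‖ := by
    rw [Submodule.coe_orthogonalProjectionOnto_apply W', Submodule.starProjection_minimal]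
    exact ciInf_le ⟨0, fun r ⟨x, hx⟩ => hx ▸ norm_nonneg _⟩ (⟨_, hvW'⟩ : W')
  have key : u - ((Submodule.orthogonalProjectionOnto W u : H) + v) = e - v := by
    rw [he]; abel
  have hev : inner ℝ (e - v) v = (0 : ℝ) :=
    Submodule.starProjection_inner_eq_zero (K := O) e v (Submodule.coe_mem _)
  have h2 : ‖e - v‖ ^ 2 = ‖e‖ ^ 2 - ‖v‖ ^ 2 := by
    have h3 := norm_add_sq_real (e - v) v
    rw [sub_add_cancel, hev] at h3
    linarith
  calc ‖u - (Submodule.orthogonalProjectionOnto W' u : H)‖ ^ 2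
      ≤ ‖u - ((Submodule.orthogonalProjectionOnto W u : H) + v)‖ ^ 2 := by
        exact pow_le_pow_left₀ (norm_nonneg _) h1 2
    _ = ‖e - v‖ ^ 2 := by rw [key]
    _ = ‖e‖ ^ 2 - ‖v‖ ^ 2 := h2
end

section
/- Let H be a real Hilbert space and let O_1, …, O_N be complete (closed) subspaces of H satisfying the partition-of-unity stability property with constant c_pu > 0, i.e. every φ ∈ H can be written φ = Σ_{i=1}^N φ_i with φ_i ∈ O_i and Σ_{i=1}^N ‖φ_i‖² ≤ c_pu² ‖φ‖². Then for every r ∈ H: ‖r‖² ≤ c_pu² · Σ_{i=1}^N ‖P_{O_i} r‖². -/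
/-- Localization estimate (equation (11), Proposition 5.1 of Buhr et al. 2017):
if the complete subspaces `O i` satisfy the partition-of-unity stability
property with constant `c_pu > 0`, then
`‖r‖² ≤ c_pu² ∑ i ‖P_{O i} r‖²` for every `r ∈ H`. -/
theorem norm_sq_le_cpu_sq_mul_sum_proj_sq
    {H : Type*} [NormedAddCommGroup H] [InnerProductSpace ℝ H] [CompleteSpace H]
    (N : ℕ) (O : Fin N → Submodule ℝ H) [∀ i, CompleteSpace (O i)]
    (c_pu : ℝ) (hc_pu : 0 < c_pu)
    (hpu : ∀ φ : H, ∃ ψ : Fin N → H, (∀ i, ψ i ∈ O i) ∧ (∑ i, ψ i) = φ ∧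
      ∑ i, ‖ψ i‖ ^ 2 ≤ c_pu ^ 2 * ‖φ‖ ^ 2)
    (r : H) :
    ‖r‖ ^ 2 ≤ c_pu ^ 2 * ∑ i, ‖((O i).orthogonalProjectionOnto r : H)‖ ^ 2 := by
  rcases eq_or_ne r 0 with rfl | hr
  · simp
  obtain ⟨ψ, hmem, hsum, hstab⟩ := hpu r
  -- ‖r‖² = ∑ ⟪r, ψ i⟫ = ∑ ⟪P_i r, ψ i⟫
  have key : ‖r‖ ^ 2 = ∑ i, inner ℝ (((O i).orthogonalProjectionOnto r : H)) (ψ i) := by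
    have h1 : (‖r‖ : ℝ) ^ 2 = inner ℝ r r := (real_inner_self_eq_norm_sq r).symm
    rw [h1]
    have h3 : (inner ℝ r r : ℝ) = inner ℝ r (∑ i, ψ i) := by rw [hsum]
    rw [h3, inner_sum]
    refine Finset.sum_congr rfl fun i _ => ?_
    have horth : r - ((O i).orthogonalProjectionOnto r : H) ∈ (O i)ᗮ :=
      (O i).sub_starProjection_mem_orthogonal r
    have h2 : inner ℝ (r - ((O i).orthogonalProjectionOnto r : H)) (ψ i) = (0 : ℝ) := by
      rw [real_inner_comm]; exact horth (ψ i) (hmem i)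
    rw [inner_sub_left, sub_eq_zero] at h2
    exact h2
  have cs : ‖r‖ ^ 2 ≤ ∑ i, ‖((O i).orthogonalProjectionOnto r : H)‖ * ‖ψ i‖ := by
    rw [key]
    exact Finset.sum_le_sum fun i _ => real_inner_le_norm _ _
  have cs2 : (∑ i, ‖((O i).orthogonalProjectionOnto r : H)‖ * ‖ψ i‖) ^ 2 ≤
      (∑ i, ‖((O i).orthogonalProjectionOnto r : H)‖ ^ 2) * ∑ i, ‖ψ i‖ ^ 2 :=
    Finset.sum_mul_sq_le_sq_mul_sq _ _ _
  have hrpos : (0:ℝ) < ‖r‖ ^ 2 := pow_pos (norm_pos_iff.mpr hr) 2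
  have main : (‖r‖ ^ 2) ^ 2 ≤
      (∑ i, ‖((O i).orthogonalProjectionOnto r : H)‖ ^ 2) * (c_pu ^ 2 * ‖r‖ ^ 2) := by
    calc (‖r‖ ^ 2) ^ 2 ≤ (∑ i, ‖((O i).orthogonalProjectionOnto r : H)‖ * ‖ψ i‖) ^ 2 := by
          apply pow_le_pow_left₀ (le_of_lt hrpos) cs
      _ ≤ (∑ i, ‖((O i).orthogonalProjectionOnto r : H)‖ ^ 2) * ∑ i, ‖ψ i‖ ^ 2 := cs2
      _ ≤ (∑ i, ‖((O i).orthogonalProjectionOnto r : H)‖ ^ 2) * (c_pu ^ 2 * ‖r‖ ^ 2) := by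
          apply mul_le_mul_of_nonneg_left hstab
          positivity
  nlinarith [main, hrpos]
end

section
/- Let H be a real Hilbert space and let O_1, …, O_N be complete (closed) subspaces of H satisfying the partition-of-unity stability property with constant c_pu > 0. Let r ∈ H and let k ∈ {1,…,N} be an index such that ‖P_{O_k} r‖ ≥ ‖P_{O_i} r‖ for all i = 1,…,N. Then ‖P_{O_k} r‖² ≥ (1/(N · c_pu²)) · ‖r‖². -/
/-- Equations (10)–(13) combined: under the partition-of-unity stability
property with constant `c_pu > 0`, the maximal local projection of `r`
satisfies `‖P_{O k} r‖² ≥ (1/(N c_pu²)) ‖r‖²`. -/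
theorem max_local_proj_sq_ge
    {H : Type*} [NormedAddCommGroup H] [InnerProductSpace ℝ H] [CompleteSpace H]
    (N : ℕ) (O : Fin N → Submodule ℝ H) [∀ i, CompleteSpace (O i)]
    (c_pu : ℝ) (hc_pu : 0 < c_pu)
    (hpu : ∀ φ : H, ∃ ψ : Fin N → H, (∀ i, ψ i ∈ O i) ∧ (∑ i, ψ i) = φ ∧
      ∑ i, ‖ψ i‖ ^ 2 ≤ c_pu ^ 2 * ‖φ‖ ^ 2)
    (r : H) (k : Fin N)
    (hk : ∀ i, ‖(Submodule.orthogonalProjectionOnto (O i) r : H)‖ ≤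
      ‖(Submodule.orthogonalProjectionOnto (O k) r : H)‖) :
    1 / (N * c_pu ^ 2) * ‖r‖ ^ 2 ≤ ‖(Submodule.orthogonalProjectionOnto (O k) r : H)‖ ^ 2 := by
  obtain ⟨ψ, hmem, hsum, hbound⟩ := hpu r
  set M : ℝ := ‖(Submodule.orthogonalProjectionOnto (O k) r : H)‖ with hM
  have hNpos : 0 < (N : ℝ) := by exact_mod_cast k.pos
  have hMnn : 0 ≤ M := norm_nonneg _
  -- key estimate : ‖r‖² ≤ M * Σ ‖ψ i‖
  have h1 : ‖r‖ ^ 2 ≤ M * ∑ i, ‖ψ i‖ := by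
    have hrr : ‖r‖ ^ 2 = ∑ i, inner ℝ r (ψ i) := by
      rw [← real_inner_self_eq_norm_sq, ← hsum, inner_sum]
    rw [hrr, Finset.mul_sum]
    apply Finset.sum_le_sum
    intro i _
    have hzero : inner ℝ (r - (Submodule.orthogonalProjectionOnto (O i) r : H)) (ψ i) = (0 : ℝ) :=
      (O i).starProjection_inner_eq_zero r (ψ i) (hmem i)
    have heq : inner ℝ r (ψ i) = (inner ℝ ((Submodule.orthogonalProjectionOnto (O i) r : H)) (ψ i) : ℝ) := by
      have := inner_sub_left (𝕜 := ℝ) r ((Submodule.orthogonalProjectionOnto (O i) r : H)) (ψ i)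
      rw [hzero] at this
      linarith
    rw [heq]
    calc (inner ℝ ((Submodule.orthogonalProjectionOnto (O i) r : H)) (ψ i) : ℝ)
        ≤ ‖(Submodule.orthogonalProjectionOnto (O i) r : H)‖ * ‖ψ i‖ := real_inner_le_norm _ _
      _ ≤ M * ‖ψ i‖ := mul_le_mul_of_nonneg_right (hk i) (norm_nonneg _)
  -- Cauchy-Schwarz : (Σ ‖ψ i‖)² ≤ N * Σ ‖ψ i‖²
  have h2 : (∑ i, ‖ψ i‖) ^ 2 ≤ (N : ℝ) * ∑ i, ‖ψ i‖ ^ 2 := by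
    simpa using sq_sum_le_card_mul_sum_sq (s := Finset.univ) (f := fun i => ‖ψ i‖)
  have h3 : (∑ i, ‖ψ i‖) ^ 2 ≤ (N : ℝ) * (c_pu ^ 2 * ‖r‖ ^ 2) :=
    h2.trans (by nlinarith)
  -- combine : ‖r‖⁴ ≤ M² * N * c_pu² * ‖r‖²
  have h4 : (‖r‖ ^ 2) ^ 2 ≤ M ^ 2 * ((N : ℝ) * (c_pu ^ 2 * ‖r‖ ^ 2)) := by
    calc (‖r‖ ^ 2) ^ 2 ≤ (M * ∑ i, ‖ψ i‖) ^ 2 := by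
          apply pow_le_pow_left₀ (by positivity) h1
      _ = M ^ 2 * (∑ i, ‖ψ i‖) ^ 2 := by ring
      _ ≤ M ^ 2 * ((N : ℝ) * (c_pu ^ 2 * ‖r‖ ^ 2)) :=
          mul_le_mul_of_nonneg_left h3 (by positivity)
  rcases eq_or_lt_of_le (norm_nonneg r) with h0 | h0
  · rw [← h0]
    simpa using sq_nonneg M
  · rw [div_mul_eq_mul_div, one_mul, div_le_iff₀ (by positivity)]
    nlinarith [mul_pos h0 h0]
end

section
/- Let d ≥ 1 and let κ : ℝ^d → ℝ be measurable with 0 < κ_min ≤ κ(x) ≤ κ_max for all x. Let ρ_1, …, ρ_N : ℝ^d → ℝ be differentiable functions with |ρ_i(x)| ≤ M_ρ and ‖∇ρ_i(x)‖ ≤ M_∇ for all i and x, such that every x ∈ ℝ^d satisfies ρ_i(x) ≠ 0 or ∇ρ_i(x) ≠ 0 for at most J indices i. Let φ : ℝ^d → ℝ be differentiable, with x ↦ φ(x)², x ↦ κ(x)‖∇φ(x)‖², and each x ↦ κ(x)‖∇(ρ_i φ)(x)‖² integrable with respect to Lebesgue measure, and suppose the Friedrichs inequality ∫ φ(x)²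 dx ≤ c_f ∫ ‖∇φ(x)‖² dx holds. Then Σ_{i=1}^N ∫ κ(x) ‖∇(ρ_i φ)(x)‖² dx ≤ 2J · ( c_f (κ_max/κ_min) M_∇² + M_ρ² ) · ∫ κ(x) ‖∇φ(x)‖² dx. -/
open MeasureTheory

set_option maxHeartbeats 1000000 in
/-- Proposition (upper bound of `c_pu`):
`∑ i ∫ κ |∇(ρ_i φ)|² ≤ 2 J (c_f (κ_max/κ_min) (max_i ‖∇ρ_i‖_∞)² + (max_i ‖ρ_i‖_∞)²) ∫ κ |∇φ|²`,
where `J` bounds the number of indices `i` with `ρ_i(x) ≠ 0` or `∇ρ_i(x) ≠ 0`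
at any point `x`, and `c_f` is the Friedrichs constant. -/
theorem cpu_upper_bound
    (d : ℕ) (hd : 1 ≤ d)
    (κ : EuclideanSpace ℝ (Fin d) → ℝ) (hκm : Measurable κ)
    (κmin κmax : ℝ) (hκmin : 0 < κmin)
    (hκ : ∀ x, κmin ≤ κ x ∧ κ x ≤ κmax)
    (N : ℕ) (ρ : Fin N → EuclideanSpace ℝ (Fin d) → ℝ)
    (hρdiff : ∀ i, Differentiable ℝ (ρ i))
    (Mρ : ℝ) (hρ : ∀ i x, |ρ i x| ≤ Mρ)
    (Mgrad : ℝ) (hgradρ : ∀ i x, ‖fderiv ℝ (ρ i) x‖ ≤ Mgrad)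
    (J : ℕ)
    (hJ : ∀ x, ({i | ρ i x ≠ 0 ∨ fderiv ℝ (ρ i) x ≠ 0} : Set (Fin N)).ncard ≤ J)
    (φ : EuclideanSpace ℝ (Fin d) → ℝ) (hφ : Differentiable ℝ φ)
    (hφ2int : Integrable (fun x => (φ x) ^ 2))
    (hgradint : Integrable (fun x => κ x * ‖fderiv ℝ φ x‖ ^ 2))
    (hprodint : ∀ i,
      Integrable (fun x => κ x * ‖fderiv ℝ (fun y => ρ i y * φ y) x‖ ^ 2))
    (c_f : ℝ)
    (hFriedrichs : ∫ x, (φ x) ^ 2 ≤ c_f * ∫ x, ‖fderiv ℝ φ x‖ ^ 2) :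
    ∑ i : Fin N, ∫ x, κ x * ‖fderiv ℝ (fun y => ρ i y * φ y) x‖ ^ 2 ≤
      2 * (J : ℝ) * (c_f * (κmax / κmin) * Mgrad ^ 2 + Mρ ^ 2) *
        ∫ x, κ x * ‖fderiv ℝ φ x‖ ^ 2 := by
  classical
  have hκ0 : ∀ x, 0 ≤ κ x := fun x => le_of_lt (lt_of_lt_of_le hκmin (hκ x).1)
  have hκmm : κmin ≤ κmax := le_trans (hκ 0).1 (hκ 0).2
  have hκmax0 : 0 ≤ κmax := le_trans hκmin.le hκmm
  have hφm : Measurable φ := hφ.continuous.measurable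
  have hfm : Measurable fun x => fderiv ℝ φ x := measurable_fderiv ℝ φ
  -- integrability of κ φ²
  have hκφ2int : Integrable (fun x => κ x * (φ x) ^ 2) := by
    refine (hφ2int.const_mul κmax).mono
      ((hκm.mul (hφm.pow_const 2)).aestronglyMeasurable) (ae_of_all _ fun x => ?_)
    have h1 : 0 ≤ (φ x) ^ 2 := sq_nonneg _
    rw [Real.norm_eq_abs, Real.norm_eq_abs, abs_of_nonneg (mul_nonneg (hκ0 x) h1)]
    calc κ x * (φ x) ^ 2 ≤ κmax * (φ x) ^ 2 := by
          exact mul_le_mul_of_nonneg_right (hκ x).2 h1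
      _ ≤ |κmax * (φ x) ^ 2| := le_abs_self _
  -- integrability of ‖∇φ‖²
  have hgrad2int : Integrable (fun x => ‖fderiv ℝ φ x‖ ^ 2) := by
    refine (hgradint.const_mul κmin⁻¹).mono
      (((hfm.norm).pow_const 2).aestronglyMeasurable) (ae_of_all _ fun x => ?_)
    have h1 : (0:ℝ) ≤ ‖fderiv ℝ φ x‖ ^ 2 := sq_nonneg _
    rw [Real.norm_eq_abs, Real.norm_eq_abs, abs_of_nonneg h1]
    have : ‖fderiv ℝ φ x‖ ^ 2 ≤ κmin⁻¹ * (κ x * ‖fderiv ℝ φ x‖ ^ 2) := by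
      rw [← mul_assoc]
      have : 1 ≤ κmin⁻¹ * κ x := by
        rw [← inv_mul_cancel₀ hκmin.ne']
        exact mul_le_mul_of_nonneg_left (hκ x).1 (inv_nonneg.2 hκmin.le)
      nlinarith
    exact this.trans (le_abs_self _)
  set A : ℝ := ∫ x, κ x * ‖fderiv ℝ φ x‖ ^ 2 with hA
  set B : ℝ := ∫ x, ‖fderiv ℝ φ x‖ ^ 2 with hB
  set P : ℝ := ∫ x, (φ x) ^ 2 with hP
  set C : ℝ := ∫ x, κ x * (φ x) ^ 2 with hC
  have hA0 : 0 ≤ A := integral_nonneg fun x => mul_nonneg (hκ0 x) (sq_nonneg _)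
  have hB0 : 0 ≤ B := integral_nonneg fun x => sq_nonneg _
  have hP0 : 0 ≤ P := integral_nonneg fun x => sq_nonneg _
  have hC0 : 0 ≤ C := integral_nonneg fun x => mul_nonneg (hκ0 x) (sq_nonneg _)
  have hCP : C ≤ κmax * P := by
    rw [hP, ← integral_const_mul]
    exact integral_mono hκφ2int (hφ2int.const_mul κmax)
      (fun x => mul_le_mul_of_nonneg_right (hκ x).2 (sq_nonneg _))
  have hBA : κmin * B ≤ A := by
    rw [hB, ← integral_const_mul]
    exact integral_mono (hgrad2int.const_mul κmin) hgradint
      (fun x => mul_le_mul_of_nonneg_right (hκ x).1 (sq_nonneg _))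
  have hAB : A ≤ κmax * B := by
    rw [hB, ← integral_const_mul]
    exact integral_mono hgradint (hgrad2int.const_mul κmax)
      (fun x => mul_le_mul_of_nonneg_right (hκ x).2 (sq_nonneg _))
  -- key inequality : C ≤ c_f * (κmax/κmin) * A
  have hCkey : C ≤ c_f * (κmax / κmin) * A := by
    rcases le_or_gt 0 c_f with hcf | hcf
    · have : C * κmin ≤ c_f * κmax * A := by
        nlinarith [mul_le_mul_of_nonneg_left hFriedrichs hκmax0,
          mul_le_mul_of_nonneg_left hBA (mul_nonneg hcf hκmax0),
          mul_le_mul_of_nonneg_right hCP hκmin.le]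
      have h2 : c_f * (κmax / κmin) * A = (c_f * κmax * A) / κmin := by ring
      rw [h2, le_div_iff₀ hκmin]
      linarith
    · have hBneg : B ≤ 0 := by nlinarith
      have hBz : B = 0 := le_antisymm hBneg hB0
      have hAz : A = 0 := le_antisymm (by nlinarith) hA0
      have hPz : P ≤ 0 := by nlinarith
      rw [hAz, mul_zero]
      nlinarith
  -- pointwise bound
  have hpt : ∀ x, (∑ i : Fin N, κ x * ‖fderiv ℝ (fun y => ρ i y * φ y) x‖ ^ 2) ≤
      2 * (J:ℝ) * (Mgrad ^ 2 * (κ x * (φ x) ^ 2) + Mρ ^ 2 * (κ x * ‖fderiv ℝ φ x‖ ^ 2)) := by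
    intro x
    set S : Finset (Fin N) :=
      Finset.univ.filter (fun i => ρ i x ≠ 0 ∨ fderiv ℝ (ρ i) x ≠ 0) with hS
    have hcard : (S.card : ℝ) ≤ J := by
      have h := hJ x
      have he : ({i | ρ i x ≠ 0 ∨ fderiv ℝ (ρ i) x ≠ 0} : Set (Fin N)) = ↑S := by
        ext i; simp [hS]
      rw [he, Set.ncard_coe_finset] at h
      exact_mod_cast h
    have hzero : ∀ i ∈ Finset.univ, i ∉ S →
        κ x * ‖fderiv ℝ (fun y => ρ i y * φ y) x‖ ^ 2 = 0 := by
      intro i _ hi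
      simp only [hS, Finset.mem_filter, Finset.mem_univ, true_and, not_or, not_not] at hi
      rw [fderiv_fun_mul ((hρdiff i) x) (hφ x), hi.1, hi.2, zero_smul, smul_zero, add_zero]
      simp
    set c : ℝ := 2 * (Mgrad ^ 2 * (κ x * (φ x) ^ 2) + Mρ ^ 2 * (κ x * ‖fderiv ℝ φ x‖ ^ 2))
      with hc
    have hc0 : 0 ≤ c := by
      have := hκ0 x
      have h1 : (0:ℝ) ≤ κ x * (φ x) ^ 2 := mul_nonneg this (sq_nonneg _)
      have h2 : (0:ℝ) ≤ κ x * ‖fderiv ℝ φ x‖ ^ 2 := mul_nonneg this (sq_nonneg _)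
      positivity
    have hterm : ∀ i ∈ S, κ x * ‖fderiv ℝ (fun y => ρ i y * φ y) x‖ ^ 2 ≤ c := by
      intro i _
      rw [fderiv_fun_mul ((hρdiff i) x) (hφ x)]
      set f := fderiv ℝ φ x
      set g := fderiv ℝ (ρ i) x
      have h1 : ‖ρ i x • f + φ x • g‖ ≤ |ρ i x| * ‖f‖ + |φ x| * ‖g‖ := by
        refine (norm_add_le _ _).trans ?_
        rw [norm_smul, norm_smul, Real.norm_eq_abs, Real.norm_eq_abs]
      have hmix : ‖ρ i x • f + φ x • g‖ ^ 2 ≤ (|ρ i x| * ‖f‖ + |φ x| * ‖g‖) ^ 2 :=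
        pow_le_pow_left₀ (norm_nonneg _) h1 2
      have ha2 : (|ρ i x| * ‖f‖) ^ 2 ≤ Mρ ^ 2 * ‖f‖ ^ 2 := by
        have h3 : |ρ i x| ^ 2 ≤ Mρ ^ 2 := by nlinarith [abs_nonneg (ρ i x), hρ i x]
        calc (|ρ i x| * ‖f‖) ^ 2 = |ρ i x| ^ 2 * ‖f‖ ^ 2 := by ring
          _ ≤ Mρ ^ 2 * ‖f‖ ^ 2 := mul_le_mul_of_nonneg_right h3 (sq_nonneg _)
      have hb2 : (|φ x| * ‖g‖) ^ 2 ≤ Mgrad ^ 2 * (φ x) ^ 2 := by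
        have h3 : ‖g‖ ^ 2 ≤ Mgrad ^ 2 := by nlinarith [norm_nonneg g, hgradρ i x]
        calc (|φ x| * ‖g‖) ^ 2 = ‖g‖ ^ 2 * |φ x| ^ 2 := by ring
          _ ≤ Mgrad ^ 2 * |φ x| ^ 2 := mul_le_mul_of_nonneg_right h3 (sq_nonneg _)
          _ = Mgrad ^ 2 * (φ x) ^ 2 := by rw [sq_abs]
      have h2 : ‖ρ i x • f + φ x • g‖ ^ 2 ≤
          2 * (Mgrad ^ 2 * (φ x) ^ 2 + Mρ ^ 2 * ‖f‖ ^ 2) := by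
        nlinarith [sq_nonneg (|ρ i x| * ‖f‖ - |φ x| * ‖g‖)]
      calc κ x * ‖ρ i x • f + φ x • g‖ ^ 2
          ≤ κ x * (2 * (Mgrad ^ 2 * (φ x) ^ 2 + Mρ ^ 2 * ‖f‖ ^ 2)) :=
            mul_le_mul_of_nonneg_left h2 (hκ0 x)
        _ = c := by rw [hc]; ring
    calc ∑ i : Fin N, κ x * ‖fderiv ℝ (fun y => ρ i y * φ y) x‖ ^ 2
        = ∑ i ∈ S, κ x * ‖fderiv ℝ (fun y => ρ i y * φ y) x‖ ^ 2 :=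
          (Finset.sum_subset S.subset_univ hzero).symm
      _ ≤ S.card • c := Finset.sum_le_card_nsmul _ _ _ hterm
      _ = (S.card : ℝ) * c := by rw [nsmul_eq_mul]
      _ ≤ (J:ℝ) * c := mul_le_mul_of_nonneg_right hcard hc0
      _ = 2 * (J:ℝ) * (Mgrad ^ 2 * (κ x * (φ x) ^ 2) + Mρ ^ 2 * (κ x * ‖fderiv ℝ φ x‖ ^ 2)) := by
          rw [hc]; ring
  -- integrate the pointwise bound
  have hgint : Integrable (fun x => 2 * (J:ℝ) *
      (Mgrad ^ 2 * (κ x * (φ x) ^ 2) + Mρ ^ 2 * (κ x * ‖fderiv ℝ φ x‖ ^ 2))) :=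
    ((hκφ2int.const_mul (Mgrad ^ 2)).add (hgradint.const_mul (Mρ ^ 2))).const_mul (2 * (J:ℝ))
  have hmain : ∑ i : Fin N, ∫ x, κ x * ‖fderiv ℝ (fun y => ρ i y * φ y) x‖ ^ 2 ≤
      2 * (J:ℝ) * (Mgrad ^ 2 * C + Mρ ^ 2 * A) := by
    rw [← integral_finset_sum Finset.univ (fun i _ => hprodint i)]
    calc (∫ x, ∑ i : Fin N, κ x * ‖fderiv ℝ (fun y => ρ i y * φ y) x‖ ^ 2)
        ≤ ∫ x, 2 * (J:ℝ) *
            (Mgrad ^ 2 * (κ x * (φ x) ^ 2) + Mρ ^ 2 * (κ x * ‖fderiv ℝ φ x‖ ^ 2)) :=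
          integral_mono (integrable_finset_sum _ (fun i _ => hprodint i)) hgint
            (fun x => hpt x)
      _ = 2 * (J:ℝ) * (Mgrad ^ 2 * C + Mρ ^ 2 * A) := by
          rw [integral_const_mul, integral_add (hκφ2int.const_mul _) (hgradint.const_mul _),
            integral_const_mul, integral_const_mul]
  refine hmain.trans ?_
  have hJ0 : (0:ℝ) ≤ (J:ℝ) := Nat.cast_nonneg _
  nlinarith [mul_nonneg (mul_nonneg (by linarith : (0:ℝ) ≤ 2 * (J:ℝ)) (sq_nonneg Mgrad))
    (sub_nonneg.2 hCkey)]
end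

section
/- Let H be a real Hilbert space, u ∈ H, W a finite-dimensional subspace of H, and O_1, …, O_N complete (closed) subspaces of H such that each sum W + O_i is complete. For each i set u_i := P_{W + O_i} u, and let k ∈ {1,…,N} be an index such that ‖P_W u − u_k‖ ≥ ‖P_W u − u_i‖ for all i = 1,…,N. Then there exists ψ ∈ O_k such that ‖u − P_{W + span{ψ}} u‖ = ‖u − u_k‖; consequently ‖u − u_k‖ equals the minimum over i ∈ {1,…,N} and ψ ∈ O_i of ‖u − P_{W + span{ψ}} u‖. -/
open RealInnerProductSpace

/-- The projection minimizes distance over members of the subspace. -/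
lemma proj_dist_le {H : Type*} [NormedAddCommGroup H] [InnerProductSpace ℝ H]
    {K : Submodule ℝ H} [K.HasOrthogonalProjection] (u v : H) (hv : v ∈ K) :
    ‖u - (Submodule.orthogonalProjectionOnto K u : H)‖ ≤ ‖u - v‖ := by
  rw [Submodule.coe_orthogonalProjectionOnto_apply, Submodule.starProjection_minimal]
  exact ciInf_le ⟨0, fun t ⟨x, hx⟩ => hx ▸ norm_nonneg _⟩ (⟨v, hv⟩ : K)

/-- Pythagoras: dist to subspace squared. -/
lemma proj_pythagoras {H : Type*} [NormedAddCommGroup H] [InnerProductSpace ℝ H]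
    {K : Submodule ℝ H} [K.HasOrthogonalProjection] (u v : H) (hv : v ∈ K) :
    ‖u - v‖ ^ 2 = ‖u - (Submodule.orthogonalProjectionOnto K u : H)‖ ^ 2
      + ‖(Submodule.orthogonalProjectionOnto K u : H) - v‖ ^ 2 := by
  have horth : inner ℝ (u - (Submodule.orthogonalProjectionOnto K u : H))
      ((Submodule.orthogonalProjectionOnto K u : H) - v) = (0 : ℝ) := by
    rw [real_inner_comm]
    exact (Submodule.sub_starProjection_mem_orthogonal u) _
      (Submodule.sub_mem _ (Submodule.orthogonalProjectionOnto K u).2 hv)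
  have : u - v = (u - (Submodule.orthogonalProjectionOnto K u : H))
      + ((Submodule.orthogonalProjectionOnto K u : H) - v) := by abel
  rw [this]
  have := norm_add_sq_eq_norm_sq_add_norm_sq_real horth
  simpa [pow_two] using this

/-- Optimality of globally coupled online enrichment (Algorithm 2), attainment
part: there exists `ψ ∈ O k` whose span-enrichment achieves the error of the
full coupled solution `u_k = P_{W + O_k} u`; consequently `‖u - u_k‖` is the
minimum of `‖u - P_{W + span {ψ}} u‖` over all `i` and all `ψ ∈ O i`. -/
theorem globally_coupled_enrichment_attains_min
    {H : Type*} [NormedAddCommGroup H] [InnerProductSpace ℝ H] [CompleteSpace H]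
    (u : H) (N : ℕ) (W : Submodule ℝ H) [FiniteDimensional ℝ W]
    (O : Fin N → Submodule ℝ H) [∀ i, CompleteSpace (O i)]
    [∀ i, CompleteSpace ↥(W ⊔ O i)]
    (k : Fin N)
    (hk : ∀ i, ‖(Submodule.orthogonalProjectionOnto W u : H) - (Submodule.orthogonalProjectionOnto (W ⊔ O i) u : H)‖ ≤
      ‖(Submodule.orthogonalProjectionOnto W u : H) - (Submodule.orthogonalProjectionOnto (W ⊔ O k) u : H)‖) :
    (∃ ψ ∈ O k,
      ‖u - (Submodule.orthogonalProjectionOnto (W ⊔ Submodule.span ℝ {ψ}) u : H)‖ =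
        ‖u - (Submodule.orthogonalProjectionOnto (W ⊔ O k) u : H)‖) ∧
    IsLeast {t : ℝ | ∃ i : Fin N, ∃ ψ ∈ O i,
        t = ‖u - (Submodule.orthogonalProjectionOnto (W ⊔ Submodule.span ℝ {ψ}) u : H)‖}
      ‖u - (Submodule.orthogonalProjectionOnto (W ⊔ O k) u : H)‖ := by
  -- key: for every i and ψ ∈ O i, the span-enriched error ≥ ‖u - u_k‖
  have key : ∀ (i : Fin N), ∀ ψ ∈ O i,
      ‖u - (Submodule.orthogonalProjectionOnto (W ⊔ O k) u : H)‖ ≤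
        ‖u - (Submodule.orthogonalProjectionOnto (W ⊔ Submodule.span ℝ {ψ}) u : H)‖ := by
    intro i ψ hψ
    -- ‖u - u_i‖ ≤ span error since u_i is projection onto a larger space
    have hle : W ⊔ Submodule.span ℝ {ψ} ≤ W ⊔ O i :=
      sup_le_sup_left (Submodule.span_le.2 (Set.singleton_subset_iff.2 hψ)) W
    have h1 : ‖u - (Submodule.orthogonalProjectionOnto (W ⊔ O i) u : H)‖ ≤
        ‖u - (Submodule.orthogonalProjectionOnto (W ⊔ Submodule.span ℝ {ψ}) u : H)‖ :=
      proj_dist_le u _ (hle (Submodule.orthogonalProjectionOnto (W ⊔ Submodule.span ℝ {ψ}) u).2)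
    -- ‖u - u_k‖ ≤ ‖u - u_i‖ by Pythagoras with P_W u
    have h2 : ‖u - (Submodule.orthogonalProjectionOnto (W ⊔ O k) u : H)‖ ≤
        ‖u - (Submodule.orthogonalProjectionOnto (W ⊔ O i) u : H)‖ := by
      have pk := proj_pythagoras (K := W ⊔ O k) u (Submodule.orthogonalProjectionOnto W u : H)
        (Submodule.mem_sup_left (Submodule.orthogonalProjectionOnto W u).2)
      have pi := proj_pythagoras (K := W ⊔ O i) u (Submodule.orthogonalProjectionOnto W u : H)
        (Submodule.mem_sup_left (Submodule.orthogonalProjectionOnto W u).2)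
      have hki := hk i
      rw [norm_sub_rev (Submodule.orthogonalProjectionOnto W u : H) (Submodule.orthogonalProjectionOnto (W ⊔ O i) u : H),
        norm_sub_rev (Submodule.orthogonalProjectionOnto W u : H) (Submodule.orthogonalProjectionOnto (W ⊔ O k) u : H)] at hki
      rw [norm_sub_rev u (Submodule.orthogonalProjectionOnto W u : H)] at pk pi
      have hsq : ‖u - (Submodule.orthogonalProjectionOnto (W ⊔ O k) u : H)‖ ^ 2 ≤
          ‖u - (Submodule.orthogonalProjectionOnto (W ⊔ O i) u : H)‖ ^ 2 := by
        nlinarith [norm_nonneg ((Submodule.orthogonalProjectionOnto (W ⊔ O i) u : H) - (Submodule.orthogonalProjectionOnto W u : H)),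
          norm_nonneg ((Submodule.orthogonalProjectionOnto (W ⊔ O k) u : H) - (Submodule.orthogonalProjectionOnto W u : H))]
      nlinarith [hsq, norm_nonneg (u - (Submodule.orthogonalProjectionOnto (W ⊔ O k) u : H)),
        norm_nonneg (u - (Submodule.orthogonalProjectionOnto (W ⊔ O i) u : H))]
    exact h2.trans h1
  -- attainment: decompose u_k = w + ψ
  obtain ⟨w, hw, ψ, hψ, huk⟩ := Submodule.mem_sup.1 (Submodule.orthogonalProjectionOnto (W ⊔ O k) u).2
  have hattain : ‖u - (Submodule.orthogonalProjectionOnto (W ⊔ Submodule.span ℝ {ψ}) u : H)‖ =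
      ‖u - (Submodule.orthogonalProjectionOnto (W ⊔ O k) u : H)‖ := by
    refine le_antisymm ?_ (key k ψ hψ)
    have hmem : (Submodule.orthogonalProjectionOnto (W ⊔ O k) u : H) ∈ W ⊔ Submodule.span ℝ {ψ} := by
      rw [← huk]
      exact Submodule.add_mem _ (Submodule.mem_sup_left hw)
        (Submodule.mem_sup_right (Submodule.mem_span_singleton_self ψ))
    exact proj_dist_le u _ hmem
  refine ⟨⟨ψ, hψ, hattain⟩, ⟨k, ψ, hψ, hattain.symm⟩, ?_⟩
  rintro t ⟨i, φ, hφ, rfl⟩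
  exact key i φ hφ
end

section
/- Let H be a real Hilbert space, u ∈ H, and let O_1, …, O_N be complete (closed) subspaces of H satisfying the partition-of-unity stability property with constant c_pu > 0. Let W be a finite-dimensional subspace of H such that each sum W + O_i is complete, set u_i := P_{W + O_i} u for each i, and let k ∈ {1,…,N} be an index such that ‖P_W u − u_k‖ ≥ ‖P_W u − u_i‖ for all i = 1,…,N. Then ‖u − u_k‖ ≤ c · ‖u − P_W u‖, where c := sqrt(1 − 1/(N · c_pu²)). -/
open RealInnerProductSpace

/-- One-step contraction for the globally coupled online enrichment
(Algorithm 2): under the partition-of-unity stability property with constant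
`c_pu > 0`, the coupled solution `u_k = P_{W + O_k} u` maximizing the solution
shift satisfies `‖u - u_k‖ ≤ c ‖u - P_W u‖` with
`c = sqrt(1 - 1/(N c_pu²))`. -/
theorem globally_coupled_one_step_contraction
    {H : Type*} [NormedAddCommGroup H] [InnerProductSpace ℝ H] [CompleteSpace H]
    (u : H) (N : ℕ) (O : Fin N → Submodule ℝ H) [∀ i, CompleteSpace (O i)]
    (c_pu : ℝ) (hc_pu : 0 < c_pu)
    (hpu : ∀ φ : H, ∃ ψ : Fin N → H, (∀ i, ψ i ∈ O i) ∧ (∑ i, ψ i) = φ ∧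
      ∑ i, ‖ψ i‖ ^ 2 ≤ c_pu ^ 2 * ‖φ‖ ^ 2)
    (W : Submodule ℝ H) [FiniteDimensional ℝ W]
    [∀ i, CompleteSpace ↥(W ⊔ O i)]
    (k : Fin N)
    (hk : ∀ i, ‖(Submodule.orthogonalProjectionOnto W u : H) - (Submodule.orthogonalProjectionOnto (W ⊔ O i) u : H)‖ ≤
      ‖(Submodule.orthogonalProjectionOnto W u : H) - (Submodule.orthogonalProjectionOnto (W ⊔ O k) u : H)‖) :
    ‖u - (Submodule.orthogonalProjectionOnto (W ⊔ O k) u : H)‖ ≤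
      Real.sqrt (1 - 1 / (N * c_pu ^ 2)) * ‖u - (Submodule.orthogonalProjectionOnto W u : H)‖ := by
  set w : H := (Submodule.orthogonalProjectionOnto W u : H) with hw
  set v : Fin N → H := fun i => (Submodule.orthogonalProjectionOnto (W ⊔ O i) u : H) with hv
  show ‖u - v k‖ ≤ Real.sqrt (1 - 1 / (N * c_pu ^ 2)) * ‖u - w‖
  set e : H := u - w with he
  -- Pythagoras for each i
  have hpyth : ∀ i, ‖e‖ ^ 2 = ‖u - v i‖ ^ 2 + ‖v i - w‖ ^ 2 := by
    intro i
    have hwmem : w ∈ W ⊔ O i :=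
      Submodule.mem_sup_left (SetLike.coe_mem (Submodule.orthogonalProjectionOnto W u))
    have h1 : u - v i ∈ (W ⊔ O i)ᗮ := Submodule.sub_starProjection_mem_orthogonal (K := W ⊔ O i) u
    have h2 : v i - w ∈ W ⊔ O i := Submodule.sub_mem _ (SetLike.coe_mem _) hwmem
    have hinner : ⟪u - v i, v i - w⟫ = 0 := by
      rw [real_inner_comm]; exact h1 _ h2
    have heq : e = (u - v i) + (v i - w) := by rw [he]; abel
    rw [heq, pow_two, pow_two, pow_two, norm_add_sq_eq_norm_sq_add_norm_sq_real hinner]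
  set M : ℝ := ‖v k - w‖ with hM
  have hMk : ∀ i, ‖v i - w‖ ≤ M := by
    intro i
    rw [hM, ← norm_sub_rev w (v i), ← norm_sub_rev w (v k)]
    exact hk i
  have hM0 : 0 ≤ M := norm_nonneg _
  obtain ⟨ψ, hψmem, hψsum, hψnorm⟩ := hpu e
  have hN0 : 0 < (N : ℝ) := by exact_mod_cast k.pos
  -- key estimate : ‖e‖^2 ≤ √N * c_pu * M * ‖e‖
  have key : ‖e‖ ^ 2 ≤ Real.sqrt N * c_pu * M * ‖e‖ := by
    have h1 : ‖e‖ ^ 2 = ∑ i, ⟪e, ψ i⟫ := by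
      rw [← real_inner_self_eq_norm_sq, ← inner_sum, hψsum]
    have h2 : ∀ i, ⟪e, ψ i⟫ = ⟪v i - w, ψ i⟫ := by
      intro i
      have horth : ⟪u - v i, ψ i⟫ = 0 := by
        rw [real_inner_comm]
        exact Submodule.sub_starProjection_mem_orthogonal (K := W ⊔ O i) u _ (Submodule.mem_sup_right (hψmem i))
      have heq : e = (u - v i) + (v i - w) := by rw [he]; abel
      rw [heq, inner_add_left, horth, zero_add]
    have h3 : ‖e‖ ^ 2 ≤ ∑ i, M * ‖ψ i‖ := by
      rw [h1]
      refine Finset.sum_le_sum fun i _ => ?_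
      rw [h2 i]
      calc ⟪v i - w, ψ i⟫ ≤ ‖v i - w‖ * ‖ψ i‖ := real_inner_le_norm _ _
        _ ≤ M * ‖ψ i‖ := mul_le_mul_of_nonneg_right (hMk i) (norm_nonneg _)
    have h4 : ∑ i, ‖ψ i‖ ≤ Real.sqrt N * (c_pu * ‖e‖) := by
      have hcs : (∑ i, ‖ψ i‖) ^ 2 ≤ N * ∑ i, ‖ψ i‖ ^ 2 := by
        simpa using sq_sum_le_card_mul_sum_sq (s := Finset.univ) (f := fun i => ‖ψ i‖)
      have h5 : (∑ i, ‖ψ i‖) ^ 2 ≤ (Real.sqrt N * (c_pu * ‖e‖)) ^ 2 := by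
        calc (∑ i, ‖ψ i‖) ^ 2 ≤ N * ∑ i, ‖ψ i‖ ^ 2 := hcs
          _ ≤ N * (c_pu ^ 2 * ‖e‖ ^ 2) := mul_le_mul_of_nonneg_left hψnorm hN0.le
          _ = (Real.sqrt N * (c_pu * ‖e‖)) ^ 2 := by
              rw [mul_pow, mul_pow, Real.sq_sqrt hN0.le]
      have hrhs : 0 ≤ Real.sqrt N * (c_pu * ‖e‖) := by positivity
      nlinarith [Finset.sum_nonneg (fun i (_ : i ∈ Finset.univ) => norm_nonneg (ψ i))]
    calc ‖e‖ ^ 2 ≤ ∑ i, M * ‖ψ i‖ := h3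
      _ = M * ∑ i, ‖ψ i‖ := by rw [Finset.mul_sum]
      _ ≤ M * (Real.sqrt N * (c_pu * ‖e‖)) := mul_le_mul_of_nonneg_left h4 hM0
      _ = Real.sqrt N * c_pu * M * ‖e‖ := by ring
  have hpk : ‖e‖ ^ 2 = ‖u - v k‖ ^ 2 + M ^ 2 := by rw [hM]; exact hpyth k
  clear_value M
  clear_value e
  clear_value v
  clear_value w
  clear hk hpu hψmem hψsum hψnorm hw hv he hM hpyth hMk
  rcases eq_or_ne ‖e‖ 0 with h0 | h0
  · -- degenerate case
    have h1 : ‖u - v k‖ = 0 := by nlinarith [sq_nonneg ‖u - v k‖, sq_nonneg M, norm_nonneg (u - v k)]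
    rw [h1]
    positivity
  · have hepos : 0 < ‖e‖ := lt_of_le_of_ne (norm_nonneg e) (Ne.symm h0)
    have hkey2 : ‖e‖ ≤ Real.sqrt N * c_pu * M := by
      have hh := key
      nlinarith
    have hkey3 : ‖e‖ ^ 2 ≤ N * c_pu ^ 2 * M ^ 2 := by
      calc ‖e‖ ^ 2 ≤ (Real.sqrt N * c_pu * M) ^ 2 := by
            apply sq_le_sq' _ hkey2
            nlinarith [Real.sqrt_nonneg (N : ℝ)]
        _ = N * c_pu ^ 2 * M ^ 2 := by
            rw [mul_pow, mul_pow, Real.sq_sqrt hN0.le]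
    have hNc : 0 < (N : ℝ) * c_pu ^ 2 := by positivity
    have hM2 : ‖e‖ ^ 2 / (N * c_pu ^ 2) ≤ M ^ 2 := by
      rw [div_le_iff₀ hNc]; linarith [hkey3]
    have hfinal : ‖u - v k‖ ^ 2 ≤ (1 - 1 / (N * c_pu ^ 2)) * ‖e‖ ^ 2 := by
      have heq2 : ‖u - v k‖ ^ 2 = ‖e‖ ^ 2 - M ^ 2 := by rw [hpk]; ring
      rw [heq2]
      have hrw : (1 - 1 / (N * c_pu ^ 2)) * ‖e‖ ^ 2
          = ‖e‖ ^ 2 - ‖e‖ ^ 2 / (N * c_pu ^ 2) := by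
        field_simp
      rw [hrw]
      linarith [hM2]
    have hc1 : 0 ≤ 1 - 1 / ((N : ℝ) * c_pu ^ 2) := by
      have hMe : M ^ 2 ≤ ‖e‖ ^ 2 := by nlinarith [sq_nonneg ‖u - v k‖]
      have h1 : 1 ≤ (N : ℝ) * c_pu ^ 2 := by
        nlinarith [mul_le_mul_of_nonneg_left hMe hNc.le, pow_pos hepos 2]
      have h2 : 1 / ((N : ℝ) * c_pu ^ 2) ≤ 1 := by
        rw [div_le_one hNc]; exact h1
      linarith
    calc ‖u - v k‖ = Real.sqrt (‖u - v k‖ ^ 2) := by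
          rw [Real.sqrt_sq (norm_nonneg _)]
      _ ≤ Real.sqrt ((1 - 1 / (N * c_pu ^ 2)) * ‖e‖ ^ 2) := Real.sqrt_le_sqrt hfinal
      _ = Real.sqrt (1 - 1 / (N * c_pu ^ 2)) * ‖e‖ := by
          rw [Real.sqrt_mul hc1, Real.sqrt_sq (norm_nonneg _)]
end

section
/- Let H be a real Hilbert space, u ∈ H, and let O_1, …, O_N be complete (closed) subspaces of H satisfying the partition-of-unity stability property with constant c_pu > 0. Let (W_n)_{n≥0} be a sequence of finite-dimensional subspaces of H defined recursively by W_0 = {0} and W_{n+1} = W_n + span{u^{(n)}_{k_n}}, where, assuming each W_n + O_i is complete, u^{(n)}_i := P_{W_n + O_i} u and the index k_n ∈ {1,…,N} satisfies ‖P_{W_n} u − u^{(n)}_{k_n}‖ ≥ ‖P_{W_n} u − u^{(n)}_i‖ for all i = 1,…,N. Then for all n ≥ 0: ‖u − P_{W_n} u‖ ≤ c^n · ‖u‖, where c := sqrt(1 − 1/(N · c_pu²)). -/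
/-- Pythagoras for the orthogonal projection: for `v ∈ K`,
`‖y - v‖² = ‖y - P_K y‖² + ‖P_K y - v‖²`. -/
lemma pyth_proj_aux {H : Type*} [NormedAddCommGroup H] [InnerProductSpace ℝ H]
    {K : Submodule ℝ H} [CompleteSpace K] (y v : H) (hv : v ∈ K) :
    ‖y - v‖ ^ 2 = ‖y - (Submodule.orthogonalProjectionOnto K y : H)‖ ^ 2 +
      ‖(Submodule.orthogonalProjectionOnto K y : H) - v‖ ^ 2 := by
  have h0 : inner ℝ (y - (Submodule.orthogonalProjectionOnto K y : H))
      ((Submodule.orthogonalProjectionOnto K y : H) - v) = (0 : ℝ) :=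
    Submodule.starProjection_inner_eq_zero y _ (Submodule.sub_mem K (Submodule.coe_mem _) hv)
  have hsum : y - v = (y - (Submodule.orthogonalProjectionOnto K y : H)) +
      ((Submodule.orthogonalProjectionOnto K y : H) - v) := by abel
  rw [hsum, norm_add_sq_real, h0]
  ring

set_option maxHeartbeats 1000000 in
/-- Corollary 2 in full: the exponential convergence bound of Theorem 1 /
Corollary 1 also holds for the globally coupled online enrichment algorithm
(Algorithm 2), which starts from `W 0 = ⊥` and in each step enriches by the
coupled solution `u⁽ⁿ⁾_{k n} = P_{W n + O_{k n}} u` maximizing the solution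
shift `‖P_{W n} u - u⁽ⁿ⁾_i‖`. -/
theorem globally_coupled_enrichment_exponential_convergence
    {H : Type*} [NormedAddCommGroup H] [InnerProductSpace ℝ H] [CompleteSpace H]
    (u : H) (N : ℕ) (O : Fin N → Submodule ℝ H) [∀ i, CompleteSpace (O i)]
    (c_pu : ℝ) (hc_pu : 0 < c_pu)
    (hpu : ∀ φ : H, ∃ ψ : Fin N → H, (∀ i, ψ i ∈ O i) ∧ (∑ i, ψ i) = φ ∧
      ∑ i, ‖ψ i‖ ^ 2 ≤ c_pu ^ 2 * ‖φ‖ ^ 2)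
    (W : ℕ → Submodule ℝ H) [∀ n, FiniteDimensional ℝ (W n)]
    [∀ n i, CompleteSpace ↥(W n ⊔ O i)]
    (k : ℕ → Fin N)
    (hW0 : W 0 = ⊥)
    (hWsucc : ∀ n, W (n + 1) = W n ⊔ Submodule.span ℝ
      {((Submodule.orthogonalProjectionOnto (W n ⊔ O (k n)) u : H))})
    (hk : ∀ n i,
      ‖(Submodule.orthogonalProjectionOnto (W n) u : H) - (Submodule.orthogonalProjectionOnto (W n ⊔ O i) u : H)‖ ≤
      ‖(Submodule.orthogonalProjectionOnto (W n) u : H) - (Submodule.orthogonalProjectionOnto (W n ⊔ O (k n)) u : H)‖) :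
    ∀ n, ‖u - (Submodule.orthogonalProjectionOnto (W n) u : H)‖ ≤
      Real.sqrt (1 - 1 / (N * c_pu ^ 2)) ^ n * ‖u‖ := by
  -- notation
  set P : ℕ → H := fun n => (Submodule.orthogonalProjectionOnto (W n) u : H) with hP
  set Q : ℕ → Fin N → H := fun n i => (Submodule.orthogonalProjectionOnto (W n ⊔ O i) u : H) with hQ
  -- the error at step 0 is ‖u‖
  have hP0 : P 0 = 0 := by
    have : P 0 ∈ W 0 := Submodule.coe_mem _
    rw [hW0] at this
    simpa using this
  -- key inequality from the partition of unity
  have key : ∀ n, ‖u - P n‖ ^ 2 ≤ (N : ℝ) * c_pu ^ 2 * ‖P n - Q n (k n)‖ ^ 2 := by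
    intro n
    obtain ⟨ψ, hmem, hsumψ, hbound⟩ := hpu (u - P n)
    set e := u - P n with he
    set d := ‖P n - Q n (k n)‖ with hd
    set S := ∑ i, ‖ψ i‖ with hS
    have hd0 : 0 ≤ d := norm_nonneg _
    have hS0 : 0 ≤ S := Finset.sum_nonneg fun i _ => norm_nonneg _
    have hterm : ∀ i, inner ℝ e (ψ i) ≤ d * ‖ψ i‖ := by
      intro i
      have h0 : inner ℝ (u - Q n i) (ψ i) = (0 : ℝ) :=
        Submodule.starProjection_inner_eq_zero u (ψ i) (Submodule.mem_sup_right (hmem i))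
      have hdecomp : (inner ℝ e (ψ i) : ℝ) =
          inner ℝ (u - Q n i) (ψ i) + inner ℝ (Q n i - P n) (ψ i) := by
        rw [← inner_add_left]
        congr 1
        rw [he]
        abel
      rw [hdecomp, h0, zero_add]
      calc (inner ℝ (Q n i - P n) (ψ i) : ℝ) ≤ ‖Q n i - P n‖ * ‖ψ i‖ :=
            real_inner_le_norm _ _
        _ ≤ d * ‖ψ i‖ := by
            apply mul_le_mul_of_nonneg_right _ (norm_nonneg _)
            rw [norm_sub_rev]
            exact hk n i
    have h2 : ‖e‖ ^ 2 ≤ d * S := by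
      calc ‖e‖ ^ 2 = inner ℝ e e := (real_inner_self_eq_norm_sq e).symm
        _ = inner ℝ e (∑ i, ψ i) := by rw [hsumψ]
        _ = ∑ i, (inner ℝ e (ψ i) : ℝ) := inner_sum _ _ _
        _ ≤ ∑ i, d * ‖ψ i‖ := Finset.sum_le_sum fun i _ => hterm i
        _ = d * S := (Finset.mul_sum _ _ _).symm
    have hcs : S ^ 2 ≤ (N : ℝ) * ∑ i, ‖ψ i‖ ^ 2 := by
      have := sq_sum_le_card_mul_sum_sq (s := (Finset.univ : Finset (Fin N)))
        (f := fun i => ‖ψ i‖)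
      simpa using this
    have hB : S ^ 2 ≤ (N : ℝ) * c_pu ^ 2 * ‖e‖ ^ 2 := by
      calc S ^ 2 ≤ (N : ℝ) * ∑ i, ‖ψ i‖ ^ 2 := hcs
        _ ≤ (N : ℝ) * (c_pu ^ 2 * ‖e‖ ^ 2) :=
            mul_le_mul_of_nonneg_left hbound (Nat.cast_nonneg N)
        _ = (N : ℝ) * c_pu ^ 2 * ‖e‖ ^ 2 := by ring
    rcases eq_or_lt_of_le (norm_nonneg e) with he0 | he0
    · have : ‖e‖ ^ 2 = 0 := by rw [← he0]; ring
      rw [this]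
      positivity
    · have hA : ‖e‖ ^ 2 * ‖e‖ ^ 2 ≤ (d * S) * (d * S) :=
        mul_le_mul h2 h2 (sq_nonneg _) (mul_nonneg hd0 hS0)
      have hC : d ^ 2 * S ^ 2 ≤ d ^ 2 * ((N : ℝ) * c_pu ^ 2 * ‖e‖ ^ 2) :=
        mul_le_mul_of_nonneg_left hB (sq_nonneg d)
      have h4 : ‖e‖ ^ 2 * ‖e‖ ^ 2 ≤ ((N : ℝ) * c_pu ^ 2 * d ^ 2) * ‖e‖ ^ 2 := by
        nlinarith [hA, hC]
      have := le_of_mul_le_mul_right h4 (by positivity : (0 : ℝ) < ‖e‖ ^ 2)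
      linarith
  -- Pythagoras: shift is dominated by error, and error decomposes
  have pyth : ∀ n, ‖u - P n‖ ^ 2 = ‖u - Q n (k n)‖ ^ 2 + ‖Q n (k n) - P n‖ ^ 2 := by
    intro n
    exact pyth_proj_aux u (P n) (Submodule.mem_sup_left (Submodule.coe_mem _))
  -- trivial case u = 0
  rcases eq_or_ne u 0 with rfl | hu
  · intro n
    simp
  -- now u ≠ 0; derive 1 ≤ N * c_pu²
  have hu0 : 0 < ‖u‖ := norm_pos_iff.mpr hu
  have he0 : ‖u - P 0‖ = ‖u‖ := by rw [hP0, sub_zero]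
  have hNc : (1 : ℝ) ≤ (N : ℝ) * c_pu ^ 2 := by
    have h1 := key 0
    have h2 := pyth 0
    have h3 : ‖Q 0 (k 0) - P 0‖ ^ 2 ≤ ‖u - P 0‖ ^ 2 := by nlinarith [sq_nonneg ‖u - Q 0 (k 0)‖]
    have h4 : ‖P 0 - Q 0 (k 0)‖ = ‖Q 0 (k 0) - P 0‖ := norm_sub_rev _ _
    rw [he0] at h1 h3
    rw [h4] at h1
    have hNcnn : (0 : ℝ) ≤ (N : ℝ) * c_pu ^ 2 := by positivity
    have h5 : ‖u‖ ^ 2 ≤ (N : ℝ) * c_pu ^ 2 * ‖u‖ ^ 2 :=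
      le_trans h1 (mul_le_mul_of_nonneg_left h3 hNcnn)
    exact le_of_mul_le_mul_right (by linarith) (pow_pos hu0 2)
  have hNc0 : (0 : ℝ) < (N : ℝ) * c_pu ^ 2 := lt_of_lt_of_le one_pos hNc
  set c := Real.sqrt (1 - 1 / ((N : ℝ) * c_pu ^ 2)) with hc
  have ht0 : (0 : ℝ) ≤ 1 - 1 / ((N : ℝ) * c_pu ^ 2) := by
    have : 1 / ((N : ℝ) * c_pu ^ 2) ≤ 1 := by
      rw [div_le_one hNc0]; exact hNc
    linarith
  have hc0 : 0 ≤ c := Real.sqrt_nonneg _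
  have hc2 : c ^ 2 = 1 - 1 / ((N : ℝ) * c_pu ^ 2) := Real.sq_sqrt ht0
  -- one-step contraction
  have step : ∀ n, ‖u - P (n + 1)‖ ≤ c * ‖u - P n‖ := by
    intro n
    have hmemQ : Q n (k n) ∈ W (n + 1) := by
      rw [hWsucc n]
      exact Submodule.mem_sup_right (Submodule.mem_span_singleton_self _)
    have h5 : ‖u - Q n (k n)‖ ^ 2 = ‖u - P (n + 1)‖ ^ 2 +
        ‖P (n + 1) - Q n (k n)‖ ^ 2 := pyth_proj_aux u (Q n (k n)) hmemQ
    have h6 := pyth n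
    have h7 := key n
    have h8 : ‖P n - Q n (k n)‖ = ‖Q n (k n) - P n‖ := norm_sub_rev _ _
    rw [h8] at h7
    have hdsq : ‖u - P n‖ ^ 2 ≤ (N : ℝ) * c_pu ^ 2 * ‖Q n (k n) - P n‖ ^ 2 := h7
    have hsq : ‖u - P (n + 1)‖ ^ 2 ≤ (c * ‖u - P n‖) ^ 2 := by
      have hexp : (c * ‖u - P n‖) ^ 2 = ‖u - P n‖ ^ 2 -
          ‖u - P n‖ ^ 2 / ((N : ℝ) * c_pu ^ 2) := by
        rw [mul_pow, hc2, sub_mul, one_mul, one_div, inv_mul_eq_div]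
      rw [hexp]
      have hquot : ‖u - P n‖ ^ 2 / ((N : ℝ) * c_pu ^ 2) ≤ ‖Q n (k n) - P n‖ ^ 2 := by
        rw [div_le_iff₀ hNc0]
        linarith [hdsq]
      linarith [h5, h6, hquot, sq_nonneg ‖P (n + 1) - Q n (k n)‖]
    calc ‖u - P (n + 1)‖ = Real.sqrt (‖u - P (n + 1)‖ ^ 2) :=
          (Real.sqrt_sq (norm_nonneg _)).symm
      _ ≤ Real.sqrt ((c * ‖u - P n‖) ^ 2) := Real.sqrt_le_sqrt hsq
      _ = c * ‖u - P n‖ := Real.sqrt_sq (mul_nonneg hc0 (norm_nonneg _))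
  -- induction
  intro n
  induction n with
  | zero => rw [pow_zero, one_mul]; exact he0.le
  | succ n ih =>
      calc ‖u - P (n + 1)‖ ≤ c * ‖u - P n‖ := step n
        _ ≤ c * (c ^ n * ‖u‖) := mul_le_mul_of_nonneg_left ih hc0
        _ = c ^ (n + 1) * ‖u‖ := by ring
end
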